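/- Let B be a Boolean algebra, identified with a sub-Boolean algebra of 2^{S_B} where S_B is the set of Boolean algebra homomorphisms from B to the two-element Boolean algebra 2, via evaluation b(s) = s(b). Let C ⊆ B contain 1 and be closed under binary meets, let X be a non-empty set, and let T = (T_x)_{x∈X} with T_x : C → 2^{S_B} maps preserving finite meets (in particular T_x(1) = 1 and T_x(c ∧ d) = T_x(c) ∧ T_x(d)). Define R_{T_x} = {(s,t) ∈ S_B × S_B : ∀c ∈ C, T_x(c)(s) ≤ c(t)} and T_{R_{T_x}}(b)(s) = ⋀{ b(t) : s R_{T_x} t }. Then for all b ∈ C and all x ∈ X: T_x(b) = T_{R_{T_x}}(b). -/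

import Mathlib

/-- Let B be a Boolean algebra, identified with a sub-Boolean
algebra of 2^{S_B} (2 modelled as Prop) where S_B is the set of Boolean algebra
homomorphisms B → 2 (bounded lattice homomorphisms), via evaluation. Let C ⊆ B
contain 1 and be closed under binary meets, and let T_x : C → 2^{S_B} preserve
finite meets (T_x(1) = 1 and T_x(c ⊓ d) = T_x(c) ⊓ T_x(d)). Then
T_x(b) = T_{R_{T_x}}(b) for all b ∈ C and x ∈ X. -/
theorem stmt16 {B X : Type*} [BooleanAlgebra B] [Nonempty X]
    (C : Set B) (hC1 : (⊤ : B) ∈ C) (hCmeet : ∀ c ∈ C, ∀ d ∈ C, c ⊓ d ∈ C)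
    (T : X → B → (BoundedLatticeHom B Prop → Prop))
    (hTtop : ∀ x, T x ⊤ = (⊤ : BoundedLatticeHom B Prop → Prop))
    (hTmeet : ∀ x, ∀ c ∈ C, ∀ d ∈ C, T x (c ⊓ d) = T x c ⊓ T x d) :
    ∀ b ∈ C, ∀ x : X,
      T x b = fun s => ⨅ t ∈ {t' : BoundedLatticeHom B Prop |
        ∀ c ∈ C, T x c s ≤ t' c}, t b := by
  intro b hb x
  funext s
  apply propext
  simp only [Set.mem_setOf_eq, iInf_Prop_eq]
  constructor
  · intro h t ht
    exact ht b hb h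
  · intro h
    by_contra hbs
    -- the filter generated by {c ∈ C | T x c s}
    have hF : Order.IsPFilter {a : B | ∃ c ∈ C, T x c s ∧ c ≤ a} := by
      apply Order.IsPFilter.of_def
      · exact ⟨⊤, ⊤, hC1, by rw [hTtop]; trivial, le_rfl⟩
      · rintro a ⟨c, hc, hcs, hca⟩ a' ⟨d, hd, hds, hda⟩
        refine ⟨a ⊓ a', ⟨c ⊓ d, hCmeet c hc d hd, ?_, inf_le_inf hca hda⟩,
          inf_le_left, inf_le_right⟩
        rw [hTmeet x c hc d hd]
        exact ⟨hcs, hds⟩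
      · rintro y z hyz ⟨c, hc, hcs, hcy⟩
        exact ⟨c, hc, hcs, le_trans hcy hyz⟩
    set F : Order.PFilter B := hF.toPFilter with hFdef
    have hmemF : ∀ a : B, a ∈ F ↔ ∃ c ∈ C, T x c s ∧ c ≤ a := fun a => Iff.rfl
    -- disjoint from principal ideal of b
    have hdisj : Disjoint (F : Set B) ((Order.Ideal.principal b : Order.Ideal B) : Set B) := by
      rw [Set.disjoint_left]
      rintro a ⟨c, hc, hcs, hca⟩ hab
      apply hbs
      have hab' : a ≤ b := hab
      have : T x (c ⊓ b) = T x c ⊓ T x b := hTmeet x c hc b hb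
      have hcb : c ⊓ b = c := inf_eq_left.mpr (hca.trans hab')
      rw [hcb] at this
      have : T x c s → T x b s := by
        intro hh
        have := congrFun this s
        simp only [Pi.inf_apply] at this
        exact ((this.mp : T x c s → T x c s ∧ T x b s) hh).2
      exact this hcs
    obtain ⟨J, hJprime, hbJ, hFJ⟩ :=
      DistribLattice.prime_ideal_of_disjoint_filter_ideal hdisj
    have hbJ' : b ∈ J := hbJ (Order.Ideal.mem_principal.mpr le_rfl)
    haveI : Order.Ideal.IsProper J := hJprime.1
    -- the homomorphism a ↦ (a ∉ J)
    let t : BoundedLatticeHom B Prop :=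
      { toFun := fun a => a ∉ J
        map_sup' := by
          intro a a'
          apply propext
          simp only [Pi.sup_apply, sup_Prop_eq]
          constructor
          · intro h
            by_contra hcon
            push_neg at hcon
            exact h (Order.Ideal.sup_mem hcon.1 hcon.2)
          · rintro (h | h) hm
            · exact h (J.lower le_sup_left hm)
            · exact h (J.lower le_sup_right hm)
        map_inf' := by
          intro a a'
          apply propext
          simp only [Pi.inf_apply, inf_Prop_eq]
          constructor
          · intro h
            constructor
            · intro ha; exact h (J.lower inf_le_left ha)
            · intro ha; exact h (J.lower inf_le_right ha)
          · rintro ⟨h1, h2⟩ hm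
            rcases hJprime.mem_or_mem hm with h | h
            · exact h1 h
            · exact h2 h
        map_top' := by
          apply propext
          constructor
          · intro _; trivial
          · intro _
            exact Order.Ideal.IsProper.top_notMem ‹_›
        map_bot' := by
          apply propext
          constructor
          · intro h; exact absurd J.bot_mem h
          · intro h; exact h.elim }
    have ht : ∀ c ∈ C, T x c s ≤ t c := by
      intro c hc hcs
      have hcF : c ∈ F := ⟨c, hc, hcs, le_rfl⟩
      exact Set.disjoint_left.mp hFJ hcF
    exact (h t ht) hbJ'
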